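/- arXiv:1603.04210 — 3 statements merged into one kernel-verified Lean document; each statement's English description precedes it below -/
import Mathlib

section
/- For a finite family of intervals on the real line, the maximum size of a d-fold packing satisfies ν_{d-1} ≥ ν_d · (1 − 1/d) for every integer d ≥ 1, where ν_k is the maximum size of a k-fold packing. -/
open scoped Classical


/-- A `k`-fold packing of a finite family `I` of closed intervals (given by their
endpoint pairs) is a subfamily `P ⊆ I` such that every real point lies in at most
`k` intervals of `P`. -/
def IsKFoldIntervalPacking (I : Finset (ℝ × ℝ)) (k : ℕ) (P : Finset (ℝ × ℝ)) : Prop :=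
  P ⊆ I ∧ ∀ x : ℝ, (P.filter fun p => x ∈ Set.Icc p.1 p.2).card ≤ k

/-- Any family of intervals of depth at most `d` can be properly `d`-colored. -/
lemma exists_interval_coloring (d : ℕ) (hd : 1 ≤ d) :
    ∀ P : Finset (ℝ × ℝ), (∀ x : ℝ, (P.filter fun p => x ∈ Set.Icc p.1 p.2).card ≤ d) →
    ∃ c : ℝ × ℝ → Fin d, ∀ p ∈ P, ∀ q ∈ P, p ≠ q →
      (∃ x : ℝ, x ∈ Set.Icc p.1 p.2 ∧ x ∈ Set.Icc q.1 q.2) → c p ≠ c q := by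
  intro P
  induction P using Finset.strongInduction with
  | _ P ih =>
    intro hP
    rcases P.eq_empty_or_nonempty with rfl | hne
    · exact ⟨fun _ => ⟨0, hd⟩, by simp⟩
    obtain ⟨p, hp, hmax⟩ := P.exists_max_image (fun p => p.1) hne
    obtain ⟨c, hc⟩ := ih (P.erase p) (Finset.erase_ssubset hp)
      (fun x => le_trans (Finset.card_le_card
        (Finset.filter_subset_filter _ (P.erase_subset p))) (hP x))
    set N := (P.erase p).filter
      (fun q => ∃ x : ℝ, x ∈ Set.Icc p.1 p.2 ∧ x ∈ Set.Icc q.1 q.2) with hN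
    have hNmem : ∀ q ∈ N, p.1 ∈ Set.Icc q.1 q.2 := by
      intro q hq
      rw [hN, Finset.mem_filter] at hq
      obtain ⟨hq1, x, hx1, hx2⟩ := hq
      have hq11 : q.1 ≤ p.1 := hmax q (Finset.mem_of_mem_erase hq1)
      exact ⟨hq11, le_trans hx1.1 hx2.2⟩
    have hNcard : N.card < d := by
      rcases N.eq_empty_or_nonempty with h0 | ⟨q0, hq0⟩
      · simpa [h0] using (Nat.pos_of_ne_zero (by omega) : 0 < d)
      have hp1 : p.1 ∈ Set.Icc p.1 p.2 := by
        rw [hN, Finset.mem_filter] at hq0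
        obtain ⟨_, x, hx1, _⟩ := hq0
        exact ⟨le_refl _, le_trans hx1.1 hx1.2⟩
      have hpN : p ∉ N := fun h => (Finset.notMem_erase p P) (by
        rw [hN, Finset.mem_filter] at h; exact h.1)
      have hsub : insert p N ⊆ P.filter (fun q => p.1 ∈ Set.Icc q.1 q.2) := by
        intro q hq
        rcases Finset.mem_insert.mp hq with rfl | hq
        · exact Finset.mem_filter.mpr ⟨hp, hp1⟩
        · exact Finset.mem_filter.mpr ⟨Finset.mem_of_mem_erase
            ((Finset.mem_filter.mp hq).1), hNmem q hq⟩
      have := le_trans (Finset.card_le_card hsub) (hP p.1)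
      rwa [Finset.card_insert_of_notMem hpN, Nat.add_one_le_iff] at this
    obtain ⟨i, hi⟩ : ∃ i : Fin d, i ∉ N.image c := by
      by_contra h
      push_neg at h
      have huniv := Finset.eq_univ_iff_forall.mpr h
      have h2 : (Finset.univ : Finset (Fin d)).card ≤ N.card :=
        huniv ▸ Finset.card_image_le
      rw [Finset.card_univ, Fintype.card_fin] at h2
      omega
    refine ⟨Function.update c p i, ?_⟩
    intro a ha b hb hab hint
    rcases eq_or_ne a p with rfl | hap
    · have hbp : b ≠ a := Ne.symm hab
      have hbN : b ∈ N := by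
        rw [hN, Finset.mem_filter]
        exact ⟨Finset.mem_erase.mpr ⟨hbp, hb⟩, hint⟩
      rw [Function.update_self, Function.update_of_ne hbp]
      intro h
      exact hi (h ▸ Finset.mem_image_of_mem c hbN)
    rcases eq_or_ne b p with rfl | hbp
    · have haN : a ∈ N := by
        rw [hN, Finset.mem_filter]
        obtain ⟨x, hx1, hx2⟩ := hint
        exact ⟨Finset.mem_erase.mpr ⟨hab, ha⟩, ⟨x, hx2, hx1⟩⟩
      rw [Function.update_self, Function.update_of_ne hap]
      intro h
      exact hi (h ▸ Finset.mem_image_of_mem c haN)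
    rw [Function.update_of_ne hap, Function.update_of_ne hbp]
    exact hc a (Finset.mem_erase.mpr ⟨hap, ha⟩) b (Finset.mem_erase.mpr ⟨hbp, hb⟩) hab hint

/-- For a finite family of intervals on the real line, the maximum sizes of
`k`-fold packings satisfy `ν_{d-1} ≥ ν_d · (1 − 1/d)` for every `d ≥ 1`. -/
theorem stmt_1 (I : Finset (ℝ × ℝ)) (ν : ℕ → ℕ)
    (hν : ∀ k : ℕ, IsGreatest {n : ℕ | ∃ P : Finset (ℝ × ℝ),
      IsKFoldIntervalPacking I k P ∧ P.card = n} (ν k))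
    (d : ℕ) (hd : 1 ≤ d) :
    (ν d : ℝ) * (1 - 1 / d) ≤ ν (d - 1) := by
  obtain ⟨P, ⟨hPI, hPd⟩, hPcard⟩ := (hν d).1
  obtain ⟨c, hc⟩ := exists_interval_coloring d hd P hPd
  set f : Fin d → ℕ := fun i => (P.filter fun p => c p = i).card with hf
  obtain ⟨i₀, _, hi₀⟩ := Finset.exists_min_image Finset.univ f ⟨⟨0, hd⟩, Finset.mem_univ _⟩
  have hsum : ∑ i, f i = P.card :=
    (Finset.card_eq_sum_card_fiberwise (fun p _ => Finset.mem_univ (c p))).symm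
  have hdm : d * f i₀ ≤ P.card := by
    calc d * f i₀ = ∑ _i : Fin d, f i₀ := by
          rw [Finset.sum_const, Finset.card_univ, Fintype.card_fin, smul_eq_mul]
      _ ≤ ∑ i, f i := Finset.sum_le_sum fun i _ => hi₀ i (Finset.mem_univ i)
      _ = P.card := hsum
  set Q := P.filter (fun p => ¬ (c p = i₀)) with hQ
  have hQcard : f i₀ + Q.card = P.card := Finset.card_filter_add_card_filter_not _
  have hQpack : IsKFoldIntervalPacking I (d - 1) Q := by
    constructor
    · exact (Finset.filter_subset _ P).trans hPI
    · intro x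
      have hmap : ∀ q ∈ Q.filter (fun p => x ∈ Set.Icc p.1 p.2),
          c q ∈ Finset.univ.erase i₀ := by
        intro q hq
        rw [Finset.mem_filter, hQ, Finset.mem_filter] at hq
        exact Finset.mem_erase.mpr ⟨hq.1.2, Finset.mem_univ _⟩
      have hinj : Set.InjOn c (Q.filter (fun p => x ∈ Set.Icc p.1 p.2)) := by
        intro a ha b hb hcab
        by_contra hab
        simp only [Finset.coe_filter, Set.mem_setOf_eq] at ha hb
        exact hc a ((Finset.filter_subset _ P) ha.1) b ((Finset.filter_subset _ P) hb.1)
          hab ⟨x, ha.2, hb.2⟩ hcab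
      have := Finset.card_le_card_of_injOn c hmap hinj
      rwa [Finset.card_erase_of_mem (Finset.mem_univ i₀), Finset.card_univ,
        Fintype.card_fin] at this
  have hQle : Q.card ≤ ν (d - 1) := (hν (d - 1)).2 ⟨Q, hQpack, rfl⟩
  have hdpos : (0 : ℝ) < d := by exact_mod_cast hd
  have h1 : (f i₀ : ℝ) ≤ (ν d : ℝ) / d := by
    rw [le_div_iff₀ hdpos]
    have : (d : ℝ) * f i₀ ≤ ν d := by exact_mod_cast (hPcard ▸ hdm)
    linarith [this]
  have h2 : (Q.card : ℝ) + f i₀ = ν d := by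
    have hnat : f i₀ + Q.card = ν d := by rw [hQcard, hPcard]
    push_cast [← hnat]; ring
  have h3 : (Q.card : ℝ) ≤ ν (d - 1) := by exact_mod_cast hQle
  have h4 : (ν d : ℝ) * (1 - 1 / d) = ν d - ν d / d := by ring
  linarith
end

section
/- Let S be a family of axis-parallel rectangles in an ambient rectangle R with input density at most d (every point lies in at most d rectangles of S). Suppose a subfamily T ⊆ S of rectangles is extended vertically (each upward or downward) so that the resulting configuration has density at most d everywhere. Then the multiset of x-projections of T has clique number at most 2d: every vertical line meets at most 2d rectangles of T. -/
open Classical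

/-- The axis-parallel rectangle with x-interval `[r.1.1, r.1.2]` and
y-interval `[r.2.1, r.2.2]`, as a subset of the plane. -/
def Rect (r : (ℝ × ℝ) × (ℝ × ℝ)) : Set (ℝ × ℝ) :=
  Set.Icc r.1.1 r.1.2 ×ˢ Set.Icc r.2.1 r.2.2

/-- The rectangle `r` extended upward to the top boundary `y = H`. -/
def ExtUp (H : ℝ) (r : (ℝ × ℝ) × (ℝ × ℝ)) : Set (ℝ × ℝ) :=
  Set.Icc r.1.1 r.1.2 ×ˢ Set.Icc r.2.1 H

/-- The rectangle `r` extended downward to the bottom boundary `y = 0`. -/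
def ExtDown (r : (ℝ × ℝ) × (ℝ × ℝ)) : Set (ℝ × ℝ) :=
  Set.Icc r.1.1 r.1.2 ×ˢ Set.Icc 0 r.2.2

/-- Let `S` be a family of axis-parallel rectangles inside the ambient rectangle
`[0,W] × [0,H]`.  Suppose a subfamily `T ⊆ S` is extended vertically (each
rectangle upward or downward, according to `up`) so that the resulting
configuration has density at most `d` everywhere in the ambient rectangle.  Then
every vertical line `x = x₀` (with `0 ≤ x₀ ≤ W`) meets at most `2d` rectangles of
`T`: the x-projections of `T` have clique number at most `2d`. -/
theorem stmt_8 (W H : ℝ) (hW : 0 ≤ W) (hH : 0 ≤ H)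
    (S T : Finset ((ℝ × ℝ) × (ℝ × ℝ))) (d : ℕ)
    (up : (ℝ × ℝ) × (ℝ × ℝ) → Bool)
    (hsub : T ⊆ S)
    (hinside : ∀ r ∈ S, r.1.1 ≤ r.1.2 ∧ r.2.1 ≤ r.2.2 ∧
      0 ≤ r.1.1 ∧ r.1.2 ≤ W ∧ 0 ≤ r.2.1 ∧ r.2.2 ≤ H)
    (hdens : ∀ p ∈ (Set.Icc 0 W ×ˢ Set.Icc 0 H : Set (ℝ × ℝ)),
      (S.filter fun r =>
        p ∈ (if r ∈ T then (if up r then ExtUp H r else ExtDown r) else Rect r)).card ≤ d) :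
    ∀ x₀ ∈ Set.Icc 0 W,
      (T.filter fun r => x₀ ∈ Set.Icc r.1.1 r.1.2).card ≤ 2 * d := by
  intro x₀ hx₀
  have hA : (T.filter fun r => x₀ ∈ Set.Icc r.1.1 r.1.2 ∧ up r = true) ⊆
      S.filter fun r => ((x₀, H) : ℝ × ℝ) ∈
        (if r ∈ T then (if up r then ExtUp H r else ExtDown r) else Rect r) := by
    intro r hr
    simp only [Finset.mem_filter] at hr ⊢
    obtain ⟨hrT, hx, hu⟩ := hr
    refine ⟨hsub hrT, ?_⟩
    rw [if_pos hrT, if_pos hu]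
    exact ⟨hx, Set.mem_Icc.2 ⟨(hinside r (hsub hrT)).2.1.trans (hinside r (hsub hrT)).2.2.2.2.2, le_rfl⟩⟩
  have hB : (T.filter fun r => x₀ ∈ Set.Icc r.1.1 r.1.2 ∧ ¬ up r = true) ⊆
      S.filter fun r => ((x₀, 0) : ℝ × ℝ) ∈
        (if r ∈ T then (if up r then ExtUp H r else ExtDown r) else Rect r) := by
    intro r hr
    simp only [Finset.mem_filter] at hr ⊢
    obtain ⟨hrT, hx, hu⟩ := hr
    refine ⟨hsub hrT, ?_⟩
    rw [if_pos hrT, if_neg hu]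
    exact ⟨hx, Set.mem_Icc.2 ⟨le_rfl, (hinside r (hsub hrT)).2.2.2.2.1.trans (hinside r (hsub hrT)).2.1⟩⟩
  have hmemH : ((x₀, H) : ℝ × ℝ) ∈ (Set.Icc 0 W ×ˢ Set.Icc 0 H : Set (ℝ × ℝ)) :=
    ⟨hx₀, Set.mem_Icc.2 ⟨hH, le_rfl⟩⟩
  have hmem0 : ((x₀, 0) : ℝ × ℝ) ∈ (Set.Icc 0 W ×ˢ Set.Icc 0 H : Set (ℝ × ℝ)) :=
    ⟨hx₀, Set.mem_Icc.2 ⟨le_rfl, hH⟩⟩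
  have h1 := (Finset.card_le_card hA).trans (hdens _ hmemH)
  have h2 := (Finset.card_le_card hB).trans (hdens _ hmem0)
  calc (T.filter fun r => x₀ ∈ Set.Icc r.1.1 r.1.2).card
      = (T.filter fun r => x₀ ∈ Set.Icc r.1.1 r.1.2 ∧ up r = true).card
        + (T.filter fun r => x₀ ∈ Set.Icc r.1.1 r.1.2 ∧ ¬ up r = true).card := by
        rw [← Finset.filter_filter, ← Finset.filter_filter,
          Finset.card_filter_add_card_filter_not]
    _ ≤ d + d := add_le_add h1 h2
    _ = 2 * d := (two_mul d).symm
end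

section
/- In an m×m grid where each cell may contain a unit square, the following greedy is optimal for vertical extensions with density bound d: in each column, extend the d topmost squares upward and the d bottommost squares downward. Formally, the maximum number of squares in a single column that can be extended vertically with every grid cell covered by at most d (original or extended) squares equals min(n_c, 2d) whenever the column contains n_c squares, provided the squares in a column are at distinct rows. -/
/-- Feasibility of a vertical extension in a single column of an `m × m` grid with
density bound `d`: the squares of the column occupy the rows in `Rows` (distinct
rows), the squares with rows in `U` are extended upward (covering all cells at
rows `≥` their own), those with rows in `D` are extended downward (covering all
cells at rows `≤` their own), each square is extended in at most one direction,
and every cell of the column is covered by at most `d` (original or extended)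
squares. -/
def ColumnFeasible (m d : ℕ) (Rows U D : Finset (Fin m)) : Prop :=
  U ⊆ Rows ∧ D ⊆ Rows ∧ Disjoint U D ∧
    ∀ i : Fin m,
      (U.filter fun r => r ≤ i).card + (D.filter fun r => i ≤ r).card +
        (if i ∈ Rows \ (U ∪ D) then 1 else 0) ≤ d

lemma cross_lt {m : ℕ} (L : List (Fin m)) (hsl : List.Pairwise (· < ·) L) (b : ℕ) :
    ∀ x ∈ L.take b, ∀ y ∈ L.drop b, x < y := by
  have h := hsl
  rw [show L = L.take b ++ L.drop b from (List.take_append_drop b L).symm] at h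
  have := (List.pairwise_append.mp h).2.2
  exact this

/-- In a single column of an `m × m` grid containing squares at the distinct rows
`Rows`, the maximum number of squares that can be extended vertically (each upward
or downward) while keeping every cell covered by at most `d ≥ 1` squares equals
`min (|Rows|) (2d)`; this is achieved by extending the `d` topmost squares upward
and the `d` bottommost squares downward. -/
theorem stmt_16 (m d : ℕ) (hd : 1 ≤ d) (Rows : Finset (Fin m)) :
    IsGreatest {n : ℕ | ∃ U D : Finset (Fin m),
      ColumnFeasible m d Rows U D ∧ U.card + D.card = n}
      (min Rows.card (2 * d)) := by
  classical
  constructor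
  · -- membership: the greedy construction
    set n := Rows.card with hn
    set L := Rows.sort (· ≤ ·) with hL
    have hlen : L.length = n := Finset.length_sort _
    have hnd : L.Nodup := Finset.sort_nodup _ _
    have hsl : List.Pairwise (· < ·) L := Rows.sortedLT_sort.pairwise
    have hmemL : ∀ x, x ∈ L ↔ x ∈ Rows := fun x => Finset.mem_sort _
    set k := min d n with hk
    set a := min d (n - k) with ha
    have hkn : k ≤ n := min_le_right _ _
    have hank : a ≤ n - k := min_le_right _ _
    refine ⟨(L.drop (n - k)).toFinset, (L.take a).toFinset, ⟨?_, ?_, ?_, ?_⟩, ?_⟩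
    · intro x hx
      rw [List.mem_toFinset] at hx
      exact (hmemL x).mp (List.drop_subset _ _ hx)
    · intro x hx
      rw [List.mem_toFinset] at hx
      exact (hmemL x).mp (List.take_subset _ _ hx)
    · -- disjoint
      rw [Finset.disjoint_left]
      intro x hxU hxD
      rw [List.mem_toFinset] at hxU hxD
      have hsub : L.take a ⊆ L.take (n - k) := by
        have : L.take a = (L.take (n - k)).take a := by
          rw [List.take_take, min_eq_left hank]
        rw [this]
        exact List.take_subset _ _
      exact absurd (cross_lt L hsl (n - k) x (hsub hxD) x hxU) (lt_irrefl x)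
    · -- density
      intro i
      set U : Finset (Fin m) := (L.drop (n - k)).toFinset with hU
      set D : Finset (Fin m) := (L.take a).toFinset with hD
      have hsub : L.take a ⊆ L.take (n - k) := by
        have : L.take a = (L.take (n - k)).take a := by
          rw [List.take_take, min_eq_left hank]
        rw [this]; exact List.take_subset _ _
      have hUcard : U.card = k := by
        rw [hU, List.toFinset_card_of_nodup (hnd.sublist (List.drop_sublist _ _)),
          List.length_drop, hlen]
        omega
      have hDcard : D.card = a := by
        rw [hD, List.toFinset_card_of_nodup (hnd.sublist (List.take_sublist _ _)),
          List.length_take, hlen]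
        omega
      have hmid : ∀ x, x ∈ Rows \ (U ∪ D) → x ∈ L.take (n - k) ∧ x ∈ L.drop a := by
        intro x hx
        rw [Finset.mem_sdiff, Finset.mem_union, hU, hD, List.mem_toFinset,
          List.mem_toFinset] at hx
        have hxL : x ∈ L := (hmemL x).mpr hx.1
        constructor
        · rcases (List.mem_append.mp (by rw [List.take_append_drop]; exact hxL :
            x ∈ L.take (n - k) ++ L.drop (n - k))) with h | h
          · exact h
          · exact absurd h (fun h' => hx.2 (Or.inl h'))
        · rcases (List.mem_append.mp (by rw [List.take_append_drop]; exact hxL :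
            x ∈ L.take a ++ L.drop a)) with h | h
          · exact absurd h (fun h' => hx.2 (Or.inr h'))
          · exact h
      by_cases hcu : ∃ u ∈ U, u ≤ i
      · obtain ⟨u, huU, hui⟩ := hcu
        rw [hU, List.mem_toFinset] at huU
        have hlt : ∀ x ∈ L.take (n - k), x < u := fun x hx =>
          cross_lt L hsl (n - k) x hx u huU
        have hD0 : D.filter (fun r => i ≤ r) = ∅ := by
          rw [Finset.filter_eq_empty_iff]
          intro dd hdd
          rw [hD, List.mem_toFinset] at hdd
          exact not_le.mpr (lt_of_lt_of_le (hlt dd (hsub hdd)) hui)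
        have he : i ∉ Rows \ (U ∪ D) := by
          intro hi
          exact absurd (lt_of_lt_of_le (hlt i (hmid i hi).1) hui) (lt_irrefl i)
        rw [hD0, if_neg he]
        calc (U.filter fun r => r ≤ i).card + Finset.card ∅ + 0
            ≤ U.card := by simp [Finset.card_filter_le]
          _ = k := hUcard
          _ ≤ d := min_le_left _ _
      · have hU0 : U.filter (fun r => r ≤ i) = ∅ := by
          rw [Finset.filter_eq_empty_iff]
          intro u hu hle
          exact hcu ⟨u, hu, hle⟩
        rw [hU0]
        by_cases hi : i ∈ Rows \ (U ∪ D)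
        · have hD0 : D.filter (fun r => i ≤ r) = ∅ := by
            rw [Finset.filter_eq_empty_iff]
            intro dd hdd
            rw [hD, List.mem_toFinset] at hdd
            exact not_le.mpr (cross_lt L hsl a dd hdd i (hmid i hi).2)
          rw [hD0, if_pos hi]
          simpa using hd
        · rw [if_neg hi]
          calc Finset.card ∅ + (D.filter fun r => i ≤ r).card + 0
              ≤ D.card := by simp [Finset.card_filter_le]
            _ = a := hDcard
            _ ≤ d := min_le_left _ _
    · -- cardinality
      rw [List.toFinset_card_of_nodup (hnd.sublist (List.drop_sublist _ _)),
        List.toFinset_card_of_nodup (hnd.sublist (List.take_sublist _ _)),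
        List.length_drop, List.length_take, hlen]
      omega
  · -- upper bound
    rintro x ⟨U, D, ⟨hU, hD, hdis, hden⟩, rfl⟩
    refine le_min ?_ ?_
    · calc U.card + D.card = (U ∪ D).card := (Finset.card_union_of_disjoint hdis).symm
        _ ≤ Rows.card := Finset.card_le_card (Finset.union_subset hU hD)
    · rcases Nat.eq_zero_or_pos m with hm | hm
      · have : U = ∅ := Finset.eq_empty_of_forall_notMem (fun x _ => by
          subst hm; exact absurd x.isLt (by omega))
        have hD' : D = ∅ := Finset.eq_empty_of_forall_notMem (fun x _ => by
          subst hm; exact absurd x.isLt (by omega))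
        simp [this, hD']
      · have htop := hden ⟨m - 1, by omega⟩
        have hbot := hden ⟨0, hm⟩
        have h1 : U.filter (fun r => r ≤ (⟨m - 1, by omega⟩ : Fin m)) = U := by
          apply Finset.filter_true_of_mem
          intro r _
          rw [Fin.le_def]
          have := r.isLt
          simp only []
          omega
        have h2 : D.filter (fun r => (⟨0, hm⟩ : Fin m) ≤ r) = D := by
          apply Finset.filter_true_of_mem
          intro r _
          rw [Fin.le_def]
          simp
        rw [h1] at htop
        rw [h2] at hbot
        omega
end
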